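/- Let K be a field and C the infinite clock graph. Then the corner v L_K(C) v equals the K-linear span of the set {v} ∪ {eₙeₙ* : n ∈ ℕ} inside L_K(C). -/

import Mathlib

/-- A directed graph: vertices, edges, source and range maps. -/
structure DirGraph where
  V : Type
  E : Type
  src : E → V
  rng : E → V

namespace DirGraph

/-- Generators of the Leavitt path algebra: vertices, edges, and ghost edges. -/
inductive LGen (G : DirGraph) : Type
  | vertex : G.V → LGen G
  | edge : G.E → LGen G
  | ghost : G.E → LGen G

variable (K : Type) [Field K]

/-- The free unital associative `K`-algebra on the Leavitt generators. -/
abbrev FA (G : DirGraph) : Type := FreeAlgebra K (LGen G)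

/-- The generator corresponding to a vertex. -/
noncomputable def fv (G : DirGraph) (v : G.V) : FA K G := FreeAlgebra.ι K (LGen.vertex v)

/-- The generator corresponding to an edge. -/
noncomputable def fe (G : DirGraph) (e : G.E) : FA K G := FreeAlgebra.ι K (LGen.edge e)

/-- The generator corresponding to a ghost edge. -/
noncomputable def fg (G : DirGraph) (e : G.E) : FA K G := FreeAlgebra.ι K (LGen.ghost e)

/-- The defining relations of the Leavitt path algebra of `G` over `K`. -/
inductive LeavittRel (G : DirGraph) : FA K G → FA K G → Prop
  | vertex_same (v : G.V) : LeavittRel G (fv K G v * fv K G v) (fv K G v)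
  | vertex_ne (v w : G.V) (h : v ≠ w) : LeavittRel G (fv K G v * fv K G w) 0
  | src_edge (e : G.E) : LeavittRel G (fv K G (G.src e) * fe K G e) (fe K G e)
  | edge_rng (e : G.E) : LeavittRel G (fe K G e * fv K G (G.rng e)) (fe K G e)
  | rng_ghost (e : G.E) : LeavittRel G (fv K G (G.rng e) * fg K G e) (fg K G e)
  | ghost_src (e : G.E) : LeavittRel G (fg K G e * fv K G (G.src e)) (fg K G e)
  | ghost_edge_same (e : G.E) : LeavittRel G (fg K G e * fe K G e) (fv K G (G.rng e))
  | ghost_edge_ne (e f : G.E) (h : e ≠ f) : LeavittRel G (fg K G e * fe K G f) 0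
  | ck (v : G.V) (hfin : {e : G.E | G.src e = v}.Finite)
      (hne : {e : G.E | G.src e = v}.Nonempty) :
      LeavittRel G (fv K G v) (∑ e ∈ hfin.toFinset, fe K G e * fg K G e)

/-- The quotient of the free unital `K`-algebra on the generators by the Leavitt
relations.  The Leavitt path algebra `L_K(G)` is the non-unital subalgebra of `LPA K G`
generated by the images of the generators (see `LSub`). -/
abbrev LPA (G : DirGraph) : Type := RingQuot (LeavittRel K G)

/-- The image of a vertex in `LPA K G`. -/
noncomputable def Lv (G : DirGraph) (v : G.V) : LPA K G :=
  RingQuot.mkAlgHom K (LeavittRel K G) (fv K G v)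

/-- The image of an edge in `LPA K G`. -/
noncomputable def Le (G : DirGraph) (e : G.E) : LPA K G :=
  RingQuot.mkAlgHom K (LeavittRel K G) (fe K G e)

/-- The image of a ghost edge in `LPA K G`. -/
noncomputable def Lg (G : DirGraph) (e : G.E) : LPA K G :=
  RingQuot.mkAlgHom K (LeavittRel K G) (fg K G e)

/-- The Leavitt path algebra `L_K(G)`: the (possibly non-unital) subalgebra of `LPA K G`
generated by the images of the generators. -/
noncomputable def LSub (G : DirGraph) : NonUnitalSubalgebra K (LPA K G) :=
  NonUnitalAlgebra.adjoin K
    (Set.range (Lv K G) ∪ Set.range (Le K G) ∪ Set.range (Lg K G))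

theorem Lv_mem (G : DirGraph) (v : G.V) : Lv K G v ∈ LSub K G :=
  NonUnitalAlgebra.subset_adjoin K (Or.inl (Or.inl ⟨v, rfl⟩))

theorem Le_mem (G : DirGraph) (e : G.E) : Le K G e ∈ LSub K G :=
  NonUnitalAlgebra.subset_adjoin K (Or.inl (Or.inr ⟨e, rfl⟩))

theorem Lg_mem (G : DirGraph) (e : G.E) : Lg K G e ∈ LSub K G :=
  NonUnitalAlgebra.subset_adjoin K (Or.inr ⟨e, rfl⟩)

end DirGraph

namespace DirGraph

/-- The infinite clock graph: one central vertex `none`, vertices `some n`, and for each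
`n : ℕ` an edge `n` from `none` to `some n`. -/
def Clock : DirGraph where
  V := Option ℕ
  E := ℕ
  src := fun _ => none
  rng := fun n => some n

end DirGraph

open DirGraph

namespace ClockAux

variable (K : Type) [Field K]

-- basic relations in the clock Leavitt path algebra
lemma vv : Lv K Clock none * Lv K Clock none = Lv K Clock none := by
  simp only [Lv, ← map_mul]
  exact RingQuot.mkAlgHom_rel K (LeavittRel.vertex_same (K := K) (G := Clock) none)

lemma vw (n : ℕ) : Lv K Clock none * Lv K Clock (some n) = 0 := by
  simp only [Lv, ← map_mul]
  rw [RingQuot.mkAlgHom_rel K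
    (LeavittRel.vertex_ne (K := K) (G := Clock) none (some n) (by intro h; cases h)), map_zero]

lemma wv (n : ℕ) : Lv K Clock (some n) * Lv K Clock none = 0 := by
  simp only [Lv, ← map_mul]
  rw [RingQuot.mkAlgHom_rel K
    (LeavittRel.vertex_ne (K := K) (G := Clock) (some n) none (by intro h; cases h)), map_zero]

lemma ww (m n : ℕ) (h : m ≠ n) : Lv K Clock (some m) * Lv K Clock (some n) = 0 := by
  simp only [Lv, ← map_mul]
  rw [RingQuot.mkAlgHom_rel K
    (LeavittRel.vertex_ne (K := K) (G := Clock) (some m) (some n) (fun hc => h (Option.some.inj hc))), map_zero]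

lemma ve (n : ℕ) : Lv K Clock none * Le K Clock n = Le K Clock n := by
  simp only [Lv, Le, ← map_mul]
  exact RingQuot.mkAlgHom_rel K (LeavittRel.src_edge (K := K) (G := Clock) n)

lemma ew (n : ℕ) : Le K Clock n * Lv K Clock (some n) = Le K Clock n := by
  simp only [Lv, Le, ← map_mul]
  exact RingQuot.mkAlgHom_rel K (LeavittRel.edge_rng (K := K) (G := Clock) n)

lemma wg (n : ℕ) : Lv K Clock (some n) * Lg K Clock n = Lg K Clock n := by
  simp only [Lv, Lg, ← map_mul]
  exact RingQuot.mkAlgHom_rel K (LeavittRel.rng_ghost (K := K) (G := Clock) n)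

lemma gv (n : ℕ) : Lg K Clock n * Lv K Clock none = Lg K Clock n := by
  simp only [Lv, Lg, ← map_mul]
  exact RingQuot.mkAlgHom_rel K (LeavittRel.ghost_src (K := K) (G := Clock) n)

lemma ge_same (n : ℕ) : Lg K Clock n * Le K Clock n = Lv K Clock (some n) := by
  simp only [Lv, Le, Lg, ← map_mul]
  exact RingQuot.mkAlgHom_rel K (LeavittRel.ghost_edge_same (K := K) (G := Clock) n)

lemma ge_ne (m n : ℕ) (h : m ≠ n) : Lg K Clock m * Le K Clock n = 0 := by
  simp only [Le, Lg, ← map_mul]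
  rw [RingQuot.mkAlgHom_rel K
    (LeavittRel.ghost_edge_ne (K := K) (G := Clock) m n h), map_zero]

-- derived relations
lemma vg (n : ℕ) : Lv K Clock none * Lg K Clock n = 0 := by
  rw [← wg K n, ← mul_assoc, vw, zero_mul]

lemma ev (n : ℕ) : Le K Clock n * Lv K Clock none = 0 := by
  rw [← ew K n, mul_assoc, wv, mul_zero]

lemma wmg (m n : ℕ) (h : m ≠ n) : Lv K Clock (some m) * Lg K Clock n = 0 := by
  rw [← wg K n, ← mul_assoc, ww K m n h, zero_mul]

lemma we (m n : ℕ) : Lv K Clock (some m) * Le K Clock n = 0 := by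
  rw [← ve K n, ← mul_assoc, wv, zero_mul]

lemma gw (m n : ℕ) : Lg K Clock m * Lv K Clock (some n) = 0 := by
  rw [← gv K m, mul_assoc, vw, mul_zero]

lemma gg (m n : ℕ) : Lg K Clock m * Lg K Clock n = 0 := by
  rw [← gv K m, mul_assoc, vg, mul_zero]

lemma ee (m n : ℕ) : Le K Clock m * Le K Clock n = 0 := by
  rw [← ve K n, ← mul_assoc, ev, zero_mul]

lemma eg_ne (m n : ℕ) (h : m ≠ n) : Le K Clock m * Lg K Clock n = 0 := by
  rw [← wg K n, ← mul_assoc, ← ew K m, mul_assoc _ _ (Lv K Clock (some n)),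
    ww K m n h, mul_zero, zero_mul]

/-- The auxiliary right-corner submodule `Q`. -/
noncomputable def Q : Submodule K (LPA K Clock) :=
  Submodule.span K ({Lv K Clock none} ∪ Set.range (Lg K Clock) ∪
    Set.range (fun n : ℕ => Le K Clock n * Lg K Clock n))

/-- Each generator of the algebra maps `Q` into `Q` by left multiplication. -/
lemma gen_mul_Q (a : LGen Clock) {q : LPA K Clock} (hq : q ∈ Q K) :
    RingQuot.mkAlgHom K (LeavittRel K Clock) (FreeAlgebra.ι K a) * q ∈ Q K := by
  have hvmem : Lv K Clock none ∈ Q K :=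
    Submodule.subset_span (Or.inl (Or.inl rfl))
  have hgmem : ∀ n, Lg K Clock n ∈ Q K := fun n =>
    Submodule.subset_span (Or.inl (Or.inr ⟨n, rfl⟩))
  have hegmem : ∀ n, Le K Clock n * Lg K Clock n ∈ Q K := fun n =>
    Submodule.subset_span (Or.inr ⟨n, rfl⟩)
  induction hq using Submodule.span_induction with
  | mem x hx =>
    rcases hx with (hx | ⟨n, rfl⟩) | ⟨n, rfl⟩
    · rcases hx with rfl
      -- x = v
      cases a with
      | vertex u =>
        cases u with
        | none => rw [show RingQuot.mkAlgHom K (LeavittRel K Clock)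
              (FreeAlgebra.ι K (LGen.vertex none)) = Lv K Clock none from rfl, vv]; exact hvmem
        | some n => rw [show RingQuot.mkAlgHom K (LeavittRel K Clock)
              (FreeAlgebra.ι K (LGen.vertex (some n))) = Lv K Clock (some n) from rfl, wv]
                    exact (Q K).zero_mem
      | edge n => rw [show RingQuot.mkAlgHom K (LeavittRel K Clock)
              (FreeAlgebra.ι K (LGen.edge n)) = Le K Clock n from rfl]; erw [ev]
                  exact (Q K).zero_mem
      | ghost n => rw [show RingQuot.mkAlgHom K (LeavittRel K Clock)
              (FreeAlgebra.ι K (LGen.ghost n)) = Lg K Clock n from rfl]; erw [gv]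
                   exact hgmem n
    · -- x = g n
      cases a with
      | vertex u =>
        cases u with
        | none => rw [show RingQuot.mkAlgHom K (LeavittRel K Clock)
              (FreeAlgebra.ι K (LGen.vertex none)) = Lv K Clock none from rfl]; erw [vg]
                  exact (Q K).zero_mem
        | some m =>
          rw [show RingQuot.mkAlgHom K (LeavittRel K Clock)
              (FreeAlgebra.ι K (LGen.vertex (some m))) = Lv K Clock (some m) from rfl]
          by_cases h : m = n
          · subst h; rw [wg]; exact hgmem m
          · rw [wmg K m n h]; exact (Q K).zero_mem
      | edge m =>
        rw [show RingQuot.mkAlgHom K (LeavittRel K Clock)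
            (FreeAlgebra.ι K (LGen.edge m)) = Le K Clock m from rfl]
        by_cases h : m = n
        · subst h; exact hegmem m
        · rw [eg_ne K m n h]; exact (Q K).zero_mem
      | ghost m => rw [show RingQuot.mkAlgHom K (LeavittRel K Clock)
              (FreeAlgebra.ι K (LGen.ghost m)) = Lg K Clock m from rfl]; erw [gg]
                   exact (Q K).zero_mem
    · -- x = e n * g n
      cases a with
      | vertex u =>
        cases u with
        | none => rw [show RingQuot.mkAlgHom K (LeavittRel K Clock)
              (FreeAlgebra.ι K (LGen.vertex none)) = Lv K Clock none from rfl,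
              ← mul_assoc, ve]
                  exact hegmem n
        | some m => rw [show RingQuot.mkAlgHom K (LeavittRel K Clock)
              (FreeAlgebra.ι K (LGen.vertex (some m))) = Lv K Clock (some m) from rfl,
              ← mul_assoc, we, zero_mul]
                    exact (Q K).zero_mem
      | edge m => rw [show RingQuot.mkAlgHom K (LeavittRel K Clock)
              (FreeAlgebra.ι K (LGen.edge m)) = Le K Clock m from rfl,
              ← mul_assoc]; erw [ee, zero_mul]
                  exact (Q K).zero_mem
      | ghost m =>
        rw [show RingQuot.mkAlgHom K (LeavittRel K Clock)
            (FreeAlgebra.ι K (LGen.ghost m)) = Lg K Clock m from rfl, ← mul_assoc]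
        by_cases h : m = n
        · subst h; erw [ge_same, wg]; exact hgmem m
        · rw [ge_ne K m n h, zero_mul]; exact (Q K).zero_mem
  | zero => rw [mul_zero]; exact (Q K).zero_mem
  | add x y _ _ hx hy => rw [mul_add]; exact (Q K).add_mem hx hy
  | smul c x _ hx => rw [mul_smul_comm]; exact (Q K).smul_mem c hx

/-- `Q` is a left ideal: stable under left multiplication by anything. -/
lemma mul_Q (x : LPA K Clock) : ∀ q ∈ Q K, x * q ∈ Q K := by
  obtain ⟨y, rfl⟩ := RingQuot.mkAlgHom_surjective K (LeavittRel K Clock) x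
  induction y using FreeAlgebra.induction with
  | grade0 r =>
    intro q hq
    rw [AlgHom.commutes, Algebra.algebraMap_eq_smul_one, smul_mul_assoc, one_mul]
    exact (Q K).smul_mem r hq
  | grade1 a =>
    intro q hq
    exact gen_mul_Q K a hq
  | mul a b ha hb =>
    intro q hq
    rw [map_mul, mul_assoc]
    exact ha _ (hb _ hq)
  | add a b ha hb =>
    intro q hq
    rw [map_add, add_mul]
    exact (Q K).add_mem (ha _ hq) (hb _ hq)

end ClockAux

open ClockAux in
/-- For the infinite clock graph `C`, the corner `v L_K(C) v` equals the
`K`-linear span of `{v} ∪ {eₙ eₙ* : n ∈ ℕ}`. -/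
theorem clock_corner_eq_span (K : Type) [Field K] :
    {y : LPA K Clock | ∃ x : LPA K Clock, y = Lv K Clock none * x * Lv K Clock none} =
      ↑(Submodule.span K
        ({Lv K Clock none} ∪ Set.range fun n : ℕ => Le K Clock n * Lg K Clock n)) := by
  set M := Submodule.span K
    ({Lv K Clock none} ∪ Set.range fun n : ℕ => Le K Clock n * Lg K Clock n) with hM
  have key1 : ∀ q ∈ Q K, Lv K Clock none * q ∈ M := by
    intro q hq
    induction hq using Submodule.span_induction with
    | mem x hx =>
      rcases hx with (hx | ⟨n, rfl⟩) | ⟨n, rfl⟩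
      · rcases hx with rfl
        rw [vv]; exact Submodule.subset_span (Or.inl rfl)
      · erw [vg]; exact M.zero_mem
      · rw [← mul_assoc, ve]; exact Submodule.subset_span (Or.inr ⟨n, rfl⟩)
    | zero => rw [mul_zero]; exact M.zero_mem
    | add a b _ _ ha hb => rw [mul_add]; exact M.add_mem ha hb
    | smul c a _ ha => rw [mul_smul_comm]; exact M.smul_mem c ha
  have key2 : ∀ m ∈ M, Lv K Clock none * m * Lv K Clock none = m := by
    intro m hm
    induction hm using Submodule.span_induction with
    | mem x hx =>
      rcases hx with hx | ⟨n, rfl⟩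
      · rcases hx with rfl
        rw [vv, vv]
      · rw [← mul_assoc, ve, mul_assoc, gv]
    | zero => rw [mul_zero, zero_mul]
    | add a b _ _ ha hb => rw [mul_add, add_mul, ha, hb]
    | smul c a _ ha => rw [mul_smul_comm, smul_mul_assoc, ha]
  ext y
  constructor
  · rintro ⟨x, rfl⟩
    rw [mul_assoc]
    exact key1 _ (mul_Q K x _ (Submodule.subset_span (Or.inl (Or.inl rfl))))
  · intro hy
    exact ⟨y, (key2 y hy).symm⟩
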